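/- For every row vector v = (a₁, …, a_{n+2m−1}) ∈ R^{n+2m−1}, the Vaserstein-type matrix L(v)* lies in E_{n+2m}(R), i.e. L(v)* is a product of elementary matrices. -/

import Mathlib

open Matrix BigOperators

namespace OddUnitary

/-- A pseudoinvolution on a commutative ring `R`: `sigma` is the additive map `r ↦ r̄`
satisfying `σ(r₁r₂) = σ(r₂)·σ(1)⁻¹·σ(r₁)` and `σ(σ(r)) = r`; the field `i` is the
inverse `1̄⁻¹` of the unit `1̄ = sigma 1`. -/
structure PseudoInv (R : Type*) [CommRing R] where
  sigma : R →+ R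
  i : R
  bar_one_mul_i : sigma 1 * i = 1
  i_mul_bar_one : i * sigma 1 = 1
  bar_mul : ∀ r s : R, sigma (r * s) = sigma s * i * sigma r
  bar_bar : ∀ r : R, sigma (sigma r) = r

variable {R : Type*} [CommRing R]

/-- Entry `(i, j)` of the matrix `ψ̃_{s/2} ⊥ φ`: hyperbolic blocks
`ψ̃₁ = [[0, 1], [-1̄, 0]]` occupying the first `s` (an even number) indices,
followed by the `n × n` form matrix `φ`. -/
def psiEnt (P : PseudoInv R) {n : ℕ} (φ : Matrix (Fin n) (Fin n) R) (s i j : ℕ) : R :=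
  if i < s ∧ j < s then
    (if j = i + 1 ∧ i % 2 = 0 then 1
     else if i = j + 1 ∧ j % 2 = 0 then -(P.sigma 1) else 0)
  else if h : s ≤ i ∧ i < s + n ∧ s ≤ j ∧ j < s + n then
    φ ⟨i - s, by omega⟩ ⟨j - s, by omega⟩
  else 0

/-- Entry `(i, j)` of the matrix `ψ̃′_{s/2} ⊥ (1̄⁻¹)²·φ`, where
`ψ̃′₁ = [[0, -1̄⁻¹], [1, 0]]`. -/
def psi'Ent (P : PseudoInv R) {n : ℕ} (φ : Matrix (Fin n) (Fin n) R) (s i j : ℕ) : R :=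
  if i < s ∧ j < s then
    (if j = i + 1 ∧ i % 2 = 0 then -P.i
     else if i = j + 1 ∧ j % 2 = 0 then 1 else 0)
  else if h : s ≤ i ∧ i < s + n ∧ s ≤ j ∧ j < s + n then
    P.i * P.i * φ ⟨i - s, by omega⟩ ⟨j - s, by omega⟩
  else 0

/-- The form matrix `Ψ = ψ̃ₘ ⊥ φ` of Petrov's odd hyperbolic unitary group. -/
def PsiM (P : PseudoInv R) {n : ℕ} (φ : Matrix (Fin n) (Fin n) R) (m : ℕ) :
    Matrix (Fin (n + 2*m)) (Fin (n + 2*m)) R :=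
  fun i j => psiEnt P φ (2*m) i j

/-- The row vector `c = (1, 0, …, 0) ∈ R^{n+2m-1}`. -/
def crow (R : Type*) [CommRing R] (n m : ℕ) : Fin (n + 2*m - 1) → R :=
  fun j => if (j : ℕ) = 0 then 1 else 0

/-- The row vector `d = (-1̄⁻¹, 0, …, 0) ∈ R^{n+2m-1}`. -/
def drow (P : PseudoInv R) (n m : ℕ) : Fin (n + 2*m - 1) → R :=
  fun j => if (j : ℕ) = 0 then -P.i else 0

/-- `μ`, the lower-right `(n+2m-1) × (n+2m-1)` block of `Ψ`. -/
def muM (P : PseudoInv R) {n : ℕ} (φ : Matrix (Fin n) (Fin n) R) (m : ℕ) :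
    Matrix (Fin (n + 2*m - 1)) (Fin (n + 2*m - 1)) R :=
  fun i j => psiEnt P φ (2*m) ((i : ℕ) + 1) ((j : ℕ) + 1)

/-- `ρ`, the lower-right `(n+2m-1) × (n+2m-1)` block of `Ψ⁻¹`. -/
noncomputable def rhoM (P : PseudoInv R) {n : ℕ} (φ : Matrix (Fin n) (Fin n) R) (m : ℕ) :
    Matrix (Fin (n + 2*m - 1)) (Fin (n + 2*m - 1)) R :=
  fun i j => (PsiM P φ m)⁻¹ ⟨(i : ℕ) + 1, by omega⟩ ⟨(j : ℕ) + 1, by omega⟩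

/-- `α = I_{n+2m-1} + dᵗ·v̄·μ`. -/
def alphaM (P : PseudoInv R) {n : ℕ} (φ : Matrix (Fin n) (Fin n) R) (m : ℕ)
    (v : Fin (n + 2*m - 1) → R) : Matrix (Fin (n + 2*m - 1)) (Fin (n + 2*m - 1)) R :=
  1 + vecMulVec (drow P n m) (fun k => P.sigma (v k)) * muM P φ m

/-- `β = I_{n+2m-1} - 1̄⁻¹·ρ·v̄ᵗ·c`. -/
noncomputable def betaM (P : PseudoInv R) {n : ℕ} (φ : Matrix (Fin n) (Fin n) R) (m : ℕ)
    (v : Fin (n + 2*m - 1) → R) : Matrix (Fin (n + 2*m - 1)) (Fin (n + 2*m - 1)) R :=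
  1 - P.i • vecMulVec (rhoM P φ m *ᵥ fun k => P.sigma (v k)) (crow R n m)

/-- The Vaserstein-type matrix `L(v) = [[1, 0], [vᵗ, α]]` (block form). -/
def Lmat (P : PseudoInv R) {n : ℕ} (φ : Matrix (Fin n) (Fin n) R) (m : ℕ)
    (v : Fin (n + 2*m - 1) → R) : Matrix (Fin (n + 2*m)) (Fin (n + 2*m)) R :=
  fun i j =>
    if hi : (i : ℕ) = 0 then (if (j : ℕ) = 0 then 1 else 0)
    else if hj : (j : ℕ) = 0 then v ⟨(i : ℕ) - 1, by omega⟩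
    else alphaM P φ m v ⟨(i : ℕ) - 1, by omega⟩ ⟨(j : ℕ) - 1, by omega⟩

/-- The Vaserstein-type matrix `L(v)* = [[1, v], [0, β]]` (block form). -/
noncomputable def Lstar (P : PseudoInv R) {n : ℕ} (φ : Matrix (Fin n) (Fin n) R) (m : ℕ)
    (v : Fin (n + 2*m - 1) → R) : Matrix (Fin (n + 2*m)) (Fin (n + 2*m)) R :=
  fun i j =>
    if hi : (i : ℕ) = 0 then (if hj : (j : ℕ) = 0 then 1 else v ⟨(j : ℕ) - 1, by omega⟩)
    else if hj : (j : ℕ) = 0 then 0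
    else betaM P φ m v ⟨(i : ℕ) - 1, by omega⟩ ⟨(j : ℕ) - 1, by omega⟩

/-- `q(a₂, …, a_{n+2m-1}) = 1̄⁻¹·(ā₂, …, ā_{n+2m-1})·(ψ̃_{m-1} ⊥ φ)·(a₂, …, a_{n+2m-1})ᵗ`. -/
def qform (P : PseudoInv R) {n : ℕ} (φ : Matrix (Fin n) (Fin n) R) (m : ℕ)
    (v : Fin (n + 2*m - 1) → R) : R :=
  P.i * ∑ i : Fin (n + 2*m - 2), ∑ j : Fin (n + 2*m - 2),
    P.sigma (v ⟨(i : ℕ) + 1, by omega⟩) * psiEnt P φ (2*m - 2) i j * v ⟨(j : ℕ) + 1, by omega⟩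

/-- Condition (D) on `v = (a₁, …, a_{n+2m-1})`:
`ā₁ - a₁ = 1̄⁻¹·(ā₂, …)·(ψ̃_{m-1} ⊥ φ)·(a₂, …)ᵗ = q(a₂, …, a_{n+2m-1})`. -/
def condD (P : PseudoInv R) {n : ℕ} (φ : Matrix (Fin n) (Fin n) R) (m : ℕ)
    (hn : 1 ≤ n) (hm : 2 ≤ m) (v : Fin (n + 2*m - 1) → R) : Prop :=
  P.sigma (v ⟨0, by omega⟩) - v ⟨0, by omega⟩ = qform P φ m v

/-- Condition (E) on `v = (a₁, …, a_{n+2m-1})`: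
`σ(1̄·a₁) - 1̄·a₁ = (ā₂, …)·(ψ̃′_{m-1} ⊥ (1̄⁻¹)²·φ)ᵗ·(a₂, …)ᵗ`. -/
def condE (P : PseudoInv R) {n : ℕ} (φ : Matrix (Fin n) (Fin n) R) (m : ℕ)
    (hn : 1 ≤ n) (hm : 2 ≤ m) (v : Fin (n + 2*m - 1) → R) : Prop :=
  P.sigma (P.sigma 1 * v ⟨0, by omega⟩) - P.sigma 1 * v ⟨0, by omega⟩ =
    ∑ i : Fin (n + 2*m - 2), ∑ j : Fin (n + 2*m - 2),
      P.sigma (v ⟨(i : ℕ) + 1, by omega⟩) * psi'Ent P φ (2*m - 2) j i * v ⟨(j : ℕ) + 1, by omega⟩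

/-- The form `B(x, y) = (x mapped entrywise by σ)ᵗ·1̄⁻¹·Ψ·y` on column vectors. -/
def Bform (P : PseudoInv R) {n : ℕ} (φ : Matrix (Fin n) (Fin n) R) (m : ℕ)
    (x y : Fin (n + 2*m) → R) : R :=
  ∑ i, ∑ j, P.sigma (x i) * P.i * PsiM P φ m i j * y j

/-- Entry function of the Gram matrix `G = φ ⊥ ψ̃ₘ` (form matrix `φ` first), in the
ordered basis `(v₁, …, vₙ, e₁, e₋₁, e₂, e₋₂, …, eₘ, e₋ₘ)`. -/
def gEnt (P : PseudoInv R) {n : ℕ} (φ : Matrix (Fin n) (Fin n) R) (i j : ℕ) : R :=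
  if h : i < n ∧ j < n then φ ⟨i, by omega⟩ ⟨j, by omega⟩
  else if n ≤ i ∧ n ≤ j then
    (if j = i + 1 ∧ (i - n) % 2 = 0 then 1
     else if i = j + 1 ∧ (j - n) % 2 = 0 then -(P.sigma 1) else 0)
  else 0

/-- The Gram matrix `G = φ ⊥ ψ̃ₘ`. -/
def GM (P : PseudoInv R) {n : ℕ} (φ : Matrix (Fin n) (Fin n) R) (m : ℕ) :
    Matrix (Fin (n + 2*m)) (Fin (n + 2*m)) R :=
  fun i j => gEnt P φ i j

/-- The sesquilinear form `⟨x, y⟩ = Σ_{i,j} σ(xᵢ)·1̄⁻¹·G_{ij}·yⱼ` on `V = R^{n+2m}`. -/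
def formV (P : PseudoInv R) {n : ℕ} (φ : Matrix (Fin n) (Fin n) R) (m : ℕ)
    (x y : Fin (n + 2*m) → R) : R :=
  ∑ i, ∑ j, P.sigma (x i) * P.i * GM P φ m i j * y j

/-- The Eichler–Siegel–Dickson transvection
`T_{x,y}(r)(w) = w + x·1̄⁻¹·(⟨y, w⟩ + r·⟨x, w⟩) + y·⟨x, w⟩`. -/
def ESD (P : PseudoInv R) {n : ℕ} (φ : Matrix (Fin n) (Fin n) R) (m : ℕ)
    (x y : Fin (n + 2*m) → R) (r : R) (w : Fin (n + 2*m) → R) : Fin (n + 2*m) → R :=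
  w + (P.i * (formV P φ m y w + r * formV P φ m x w)) • x + formV P φ m x w • y

/-- The basis vector `e₁` (position `n` in the ordered basis). -/
def e1vec (R : Type*) [CommRing R] (n m : ℕ) : Fin (n + 2*m) → R :=
  fun l => if (l : ℕ) = n then 1 else 0

/-- The basis vector `e₋₁` (position `n+1` in the ordered basis). -/
def eneg1vec (R : Type*) [CommRing R] (n m : ℕ) : Fin (n + 2*m) → R :=
  fun l => if (l : ℕ) = n + 1 then 1 else 0

/-- The matrix `M₁(u, a)` of the transvection `T₁(u, a)` in the ordered basis
`(v₁, …, vₙ, e₁, e₋₁, e₂, e₋₂, …, eₘ, e₋ₘ)`; here `u` is the coordinate vector of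
`t₁v₁ + … + tₙvₙ + b₁e₁ + b₂e₂ + b₋₂e₋₂ + … + bₘeₘ + b₋ₘe₋ₘ`. -/
def M1 (P : PseudoInv R) {n : ℕ} (φ : Matrix (Fin n) (Fin n) R) (m : ℕ)
    (u : Fin (n + 2*m) → R) (a : R) : Matrix (Fin (n + 2*m)) (Fin (n + 2*m)) R :=
  fun i j =>
    if hj1 : (j : ℕ) = n + 1 then
      -- the `e₋₁` column
      if hi : (i : ℕ) < n then -u i
      else if hi1 : (i : ℕ) = n then
        -(P.sigma (u ⟨n, by omega⟩) * (P.i * P.i) + a * P.i + u ⟨n, by omega⟩)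
      else if hi2 : (i : ℕ) = n + 1 then 1
      else -u i
    else if hi1 : (i : ℕ) = n then
      -- the `e₁` row
      if hj : (j : ℕ) < n then
        -((P.i * P.i) * ∑ l : Fin n, P.sigma (u ⟨(l : ℕ), by omega⟩) * φ l ⟨(j : ℕ), hj⟩)
      else if hj2 : (j : ℕ) = n then 1
      else if hj3 : ((j : ℕ) - n) % 2 = 0 then
        P.i * P.sigma (u ⟨(j : ℕ) + 1, by omega⟩)
      else -(P.i * P.i) * P.sigma (u ⟨(j : ℕ) - 1, by omega⟩)
    else if (i : ℕ) = (j : ℕ) then 1 else 0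

/-- The matrix `M₋₁(u, a)` of the transvection `T₋₁(u, a)` in the ordered basis
`(v₁, …, vₙ, e₁, e₋₁, e₂, e₋₂, …, eₘ, e₋ₘ)`; here `u` is the coordinate vector of
`t₁v₁ + … + tₙvₙ + b₋₁e₋₁ + b₂e₂ + b₋₂e₋₂ + … + bₘeₘ + b₋ₘe₋ₘ`. -/
def Mneg1 (P : PseudoInv R) {n : ℕ} (φ : Matrix (Fin n) (Fin n) R) (m : ℕ)
    (u : Fin (n + 2*m) → R) (a : R) : Matrix (Fin (n + 2*m)) (Fin (n + 2*m)) R :=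
  fun i j =>
    if hj1 : (j : ℕ) = n then
      -- the `e₁` column
      if hi : (i : ℕ) < n then -u i
      else if hi1 : (i : ℕ) = n then 1
      else if hi2 : (i : ℕ) = n + 1 then
        -P.sigma (u ⟨n + 1, by omega⟩) + a - u ⟨n + 1, by omega⟩
      else -u i
    else if hi1 : (i : ℕ) = n + 1 then
      -- the `e₋₁` row
      if hj : (j : ℕ) < n then
        P.i * ∑ l : Fin n, P.sigma (u ⟨(l : ℕ), by omega⟩) * φ l ⟨(j : ℕ), hj⟩
      else if hj2 : (j : ℕ) = n + 1 then 1
      else if hj3 : ((j : ℕ) - n) % 2 = 0 then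
        -P.sigma (u ⟨(j : ℕ) + 1, by omega⟩)
      else P.i * P.sigma (u ⟨(j : ℕ) - 1, by omega⟩)
    else if (i : ℕ) = (j : ℕ) then 1 else 0

/-- The permutation matrix `P = [[0_{2m×n}, I_{2m}], [Iₙ, 0_{n×2m}]]`. -/
def Pperm (R : Type*) [CommRing R] (n m : ℕ) :
    Matrix (Fin (n + 2*m)) (Fin (n + 2*m)) R :=
  fun i j =>
    if (i : ℕ) < 2*m then (if (j : ℕ) = n + i then 1 else 0)
    else (if (j : ℕ) = (i : ℕ) - 2*m then 1 else 0)

/-- The coordinate vector of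
`u₁ = -a_{2m}v₁ - … - a_{n+2m-1}vₙ - a₂e₂ - a₃e₋₂ - … - a_{2m-2}eₘ - a_{2m-1}e₋ₘ`. -/
def u1vec {R : Type*} [CommRing R] {n m : ℕ} (hm : 2 ≤ m)
    (v : Fin (n + 2*m - 1) → R) : Fin (n + 2*m) → R :=
  fun l =>
    if hl : (l : ℕ) < n then -v ⟨2*m - 1 + (l : ℕ), by omega⟩
    else if hl1 : (l : ℕ) = n ∨ (l : ℕ) = n + 1 then 0
    else -v ⟨(l : ℕ) - n - 1, by omega⟩

/-- The coordinate vector of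
`u₂ = Σₖ 1̄⁻¹·(ā_{2m}·(φ⁻¹)_{k1} + … + ā_{n+2m-1}·(φ⁻¹)_{kn})·vₖ
      - (1̄⁻¹)²·ā₃e₂ + 1̄⁻¹·ā₂e₋₂ - … - (1̄⁻¹)²·ā_{2m-1}eₘ + 1̄⁻¹·ā_{2m-2}e₋ₘ`. -/
noncomputable def u2vec (P : PseudoInv R) {n : ℕ} (φ : Matrix (Fin n) (Fin n) R) {m : ℕ} (hm : 2 ≤ m)
    (v : Fin (n + 2*m - 1) → R) : Fin (n + 2*m) → R :=
  fun l =>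
    if hl : (l : ℕ) < n then
      P.i * ∑ j : Fin n, P.sigma (v ⟨2*m - 1 + (j : ℕ), by omega⟩) * φ⁻¹ ⟨(l : ℕ), hl⟩ j
    else if hl1 : (l : ℕ) = n ∨ (l : ℕ) = n + 1 then 0
    else if hl2 : ((l : ℕ) - n) % 2 = 0 then
      -(P.i * P.i) * P.sigma (v ⟨(l : ℕ) - n, by omega⟩)
    else P.i * P.sigma (v ⟨(l : ℕ) - n - 2, by omega⟩)

lemma aux_col {N : ℕ} (j : Fin N) (x : Fin N → R) (s : Finset (Fin N)) (hj : j ∉ s) :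
    ∃ l : List (Matrix (Fin N) (Fin N) R),
      (∀ A ∈ l, ∃ (i' j' : Fin N) (r : R), i' ≠ j' ∧ A = 1 + Matrix.single i' j' r) ∧
      l.prod = 1 + ∑ i ∈ s, Matrix.single i j (x i) := by
  classical
  induction s using Finset.induction_on with
  | empty => exact ⟨[], by simp⟩
  | @insert a s ha ih =>
    obtain ⟨l, hl, hprod⟩ := ih (fun h => hj (Finset.mem_insert_of_mem h))
    refine ⟨(1 + Matrix.single a j (x a)) :: l, ?_, ?_⟩
    · rintro A hA
      rcases List.mem_cons.mp hA with hA | hA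
      · exact ⟨a, j, x a, by intro h; subst h; exact hj (Finset.mem_insert_self _ _), hA⟩
      · exact hl A hA
    · rw [List.prod_cons, hprod, Finset.sum_insert ha]
      have hzero : Matrix.single a j (x a) *
          (∑ i ∈ s, Matrix.single i j (x i)) = 0 := by
        rw [Finset.mul_sum]
        refine Finset.sum_eq_zero fun i hi => ?_
        exact Matrix.single_mul_single_of_ne (c := x a) a j i
          (show j ≠ i by intro h; subst h; exact hj (Finset.mem_insert_of_mem hi)) (x i)
      simp only [add_mul, mul_add, one_mul, mul_one]
      rw [hzero]
      abel

lemma aux_row {N : ℕ} (i : Fin N) (w : Fin N → R) (s : Finset (Fin N)) (hi : i ∉ s) :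
    ∃ l : List (Matrix (Fin N) (Fin N) R),
      (∀ A ∈ l, ∃ (i' j' : Fin N) (r : R), i' ≠ j' ∧ A = 1 + Matrix.single i' j' r) ∧
      l.prod = 1 + ∑ j ∈ s, Matrix.single i j (w j) := by
  classical
  induction s using Finset.induction_on with
  | empty => exact ⟨[], by simp⟩
  | @insert a s ha ih =>
    obtain ⟨l, hl, hprod⟩ := ih (fun h => hi (Finset.mem_insert_of_mem h))
    refine ⟨(1 + Matrix.single i a (w a)) :: l, ?_, ?_⟩
    · rintro A hA
      rcases List.mem_cons.mp hA with hA | hA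
      · exact ⟨i, a, w a, by intro h; subst h; exact hi (Finset.mem_insert_self _ _), hA⟩
      · exact hl A hA
    · rw [List.prod_cons, hprod, Finset.sum_insert ha]
      have hzero : Matrix.single i a (w a) *
          (∑ j ∈ s, Matrix.single i j (w j)) = 0 := by
        rw [Finset.mul_sum]
        refine Finset.sum_eq_zero fun j hj => ?_
        exact Matrix.single_mul_single_of_ne (c := w a) i a i
          (show a ≠ i by intro h; exact hi (h ▸ Finset.mem_insert_self a s)) (w j)
      simp only [add_mul, mul_add, one_mul, mul_one]
      rw [hzero]
      abel

lemma rho_row_zero (P : PseudoInv R) {n m : ℕ} (hn : 1 ≤ n) (hm : 2 ≤ m)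
    (φ : Matrix (Fin n) (Fin n) R) (j : Fin (n + 2*m - 1)) :
    rhoM P φ m ⟨0, by omega⟩ j = 0 := by
  classical
  show (PsiM P φ m)⁻¹ ⟨1, by omega⟩ ⟨(j:ℕ)+1, by omega⟩ = 0
  by_cases hdet : IsUnit (PsiM P φ m).det
  · have h1 := Matrix.mul_nonsing_inv _ hdet
    have h2 := congrFun (congrFun h1 ⟨0, by omega⟩) ⟨(j:ℕ)+1, by omega⟩
    rw [Matrix.mul_apply] at h2
    have hrow : ∀ k : Fin (n + 2*m), PsiM P φ m ⟨0, by omega⟩ k =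
        if (k : ℕ) = 1 then 1 else 0 := by
      intro k
      by_cases hk : (k:ℕ) = 1
      · rw [if_pos hk]
        show psiEnt P φ (2*m) 0 (k:ℕ) = 1
        unfold psiEnt
        rw [if_pos ⟨by omega, by omega⟩, if_pos ⟨by omega, by omega⟩]
      · rw [if_neg hk]
        show psiEnt P φ (2*m) 0 (k:ℕ) = 0
        unfold psiEnt
        by_cases hk2 : (k:ℕ) < 2*m
        · rw [if_pos ⟨by omega, hk2⟩, if_neg (by omega), if_neg (by omega)]
        · rw [if_neg (by omega), dif_neg (by omega)]
    rw [Finset.sum_congr rfl (fun k _ => by rw [hrow k, ite_mul, one_mul, zero_mul])] at h2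
    have h3 : (∑ k : Fin (n + 2*m), if (k:ℕ) = 1 then
        (PsiM P φ m)⁻¹ k ⟨(j:ℕ)+1, by omega⟩ else 0) =
        (PsiM P φ m)⁻¹ ⟨1, by omega⟩ ⟨(j:ℕ)+1, by omega⟩ := by
      rw [Finset.sum_eq_single (⟨1, by omega⟩ : Fin (n + 2*m))]
      · rw [if_pos rfl]
      · intro b _ hb
        exact if_neg (fun h => hb (Fin.ext h))
      · simp
    rw [h3] at h2
    rw [h2, Matrix.one_apply_ne]
    intro h
    have := congrArg Fin.val h
    simp at this
  · rw [Matrix.nonsing_inv_apply_not_isUnit _ hdet]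
    simp [Matrix.zero_apply]


set_option maxHeartbeats 8000000 in
/-- for every `v ∈ R^{n+2m-1}`, the Vaserstein-type matrix `L(v)*` lies in
`E_{n+2m}(R)`, i.e. `L(v)*` is a product of elementary matrices. -/
theorem Lstar_mem_elementarySubgroup {R : Type*} [CommRing R] (P : PseudoInv R)
    {n m : ℕ} (hn : 1 ≤ n) (hm : 2 ≤ m)
    (φ : Matrix (Fin n) (Fin n) R) (hφ : IsUnit φ.det)
    (v : Fin (n + 2*m - 1) → R) :
    ∃ l : List (Matrix (Fin (n + 2*m)) (Fin (n + 2*m)) R),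
      (∀ A ∈ l, ∃ (i j : Fin (n + 2*m)) (r : R),
        i ≠ j ∧ A = 1 + Matrix.single i j r) ∧
      l.prod = Lstar P φ m v := by
  classical
  set uu : Fin (n + 2*m - 1) → R := rhoM P φ m *ᵥ (fun k => P.sigma (v k)) with huu
  set x : Fin (n + 2*m) → R := fun i => if h : 2 ≤ (i:ℕ) then
      -(P.i * uu ⟨(i:ℕ) - 1, by omega⟩) else 0 with hx
  set w : Fin (n + 2*m) → R := fun j => if h : 1 ≤ (j:ℕ) then v ⟨(j:ℕ) - 1, by omega⟩ else 0
    with hw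
  have h1N : (1:ℕ) < n + 2*m := by omega
  set one : Fin (n + 2*m) := ⟨1, by omega⟩ with hone
  set zero : Fin (n + 2*m) := ⟨0, by omega⟩ with hzero
  obtain ⟨l₁, hl₁, hp₁⟩ := aux_col one x (Finset.univ.erase one) (Finset.notMem_erase _ _)
  obtain ⟨l₂, hl₂, hp₂⟩ := aux_row zero w (Finset.univ.erase zero) (Finset.notMem_erase _ _)
  refine ⟨l₁ ++ l₂, ?_, ?_⟩
  · intro A hA
    rcases List.mem_append.mp hA with h | h
    exacts [hl₁ A h, hl₂ A h]
  rw [List.prod_append, hp₁, hp₂]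
  have hBA : (∑ i ∈ Finset.univ.erase one, Matrix.single i one (x i)) *
      (∑ j ∈ Finset.univ.erase zero, Matrix.single zero j (w j)) = 0 := by
    rw [Finset.sum_mul_sum]
    refine Finset.sum_eq_zero fun i _ => Finset.sum_eq_zero fun j _ => ?_
    refine Matrix.single_mul_single_of_ne (c := x i) i one zero ?_ (w j)
    intro h
    have := congrArg Fin.val h
    simp [hone, hzero] at this
  simp only [add_mul, mul_add, one_mul, mul_one]
  rw [hBA, add_zero]
  have hu0 : uu ⟨0, by omega⟩ = 0 := by
    rw [huu]
    simp only [Matrix.mulVec, dotProduct]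
    exact Finset.sum_eq_zero fun k _ => by rw [rho_row_zero P hn hm φ k, zero_mul]
  have hB : ∀ i j, (∑ k ∈ Finset.univ.erase one, Matrix.single k one (x k)) i j
      = if one = j then x i else 0 := by
    intro i j
    rw [Matrix.sum_apply]
    by_cases hi : i = one
    · rw [Finset.sum_eq_zero, eq_comm]
      · have : x one = 0 := by rw [hx]; exact dif_neg (by simp [hone])
        subst hi; rw [this]; simp
      · intro k hk
        have hki : k ≠ i := by rw [hi]; exact Finset.ne_of_mem_erase hk
        simp [Matrix.single, hki]
    · rw [Finset.sum_eq_single i]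
      · simp [Matrix.single]
      · intro b _ hb
        simp [Matrix.single, hb]
      · intro h
        exact absurd (Finset.mem_erase.mpr ⟨hi, Finset.mem_univ i⟩) h
  have hA : ∀ i j, (∑ k ∈ Finset.univ.erase zero, Matrix.single zero k (w k)) i j
      = if zero = i then w j else 0 := by
    intro i j
    rw [Matrix.sum_apply]
    by_cases hj : j = zero
    · rw [Finset.sum_eq_zero, eq_comm]
      · have : w zero = 0 := by rw [hw]; exact dif_neg (by simp [hzero])
        subst hj; rw [this]; simp
      · intro k hk
        have hkj : k ≠ j := by rw [hj]; exact Finset.ne_of_mem_erase hk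
        simp [Matrix.single, hkj]
    · rw [Finset.sum_eq_single j]
      · simp [Matrix.single]
      · intro b _ hb
        simp [Matrix.single, hb]
      · intro h
        exact absurd (Finset.mem_erase.mpr ⟨hj, Finset.mem_univ j⟩) h
  ext i j
  simp only [Matrix.add_apply, hB, hA, Matrix.one_apply]
  unfold Lstar
  by_cases hi0 : (i:ℕ) = 0
  · rw [dif_pos hi0]
    have hiz : zero = i := by rw [hzero]; exact (Fin.ext hi0).symm
    rw [if_pos hiz]
    by_cases hj0 : (j:ℕ) = 0
    · rw [dif_pos hj0]
      have hij : i = j := Fin.ext (by omega)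
      have h1j : one ≠ j := by
        intro h; have : (1:ℕ) = (j:ℕ) := congrArg Fin.val h; omega
      have hwj : w j = 0 := by simp only [hw]; exact dif_neg (by omega)
      rw [if_pos hij, if_neg h1j, hwj]
      ring
    · rw [dif_neg hj0]
      have hij : i ≠ j := by intro h; have : (i:ℕ) = (j:ℕ) := congrArg Fin.val h; omega
      have hwj : w j = v ⟨(j:ℕ) - 1, by omega⟩ := by
        simp only [hw]; exact dif_pos (by omega)
      rw [if_neg hij, hwj]
      by_cases hj1 : one = j
      · have hxi : x i = 0 := by simp only [hx]; exact dif_neg (by omega)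
        rw [if_pos hj1, hxi]
        ring
      · rw [if_neg hj1]
        ring
  · rw [dif_neg hi0]
    have hiz : zero ≠ i := by intro h; have : (0:ℕ) = (i:ℕ) := congrArg Fin.val h; omega
    rw [if_neg hiz]
    by_cases hj0 : (j:ℕ) = 0
    · rw [dif_pos hj0]
      have hij : i ≠ j := by intro h; have : (i:ℕ) = (j:ℕ) := congrArg Fin.val h; omega
      have h1j : one ≠ j := by intro h; have : (1:ℕ) = (j:ℕ) := congrArg Fin.val h; omega
      rw [if_neg hij, if_neg h1j]
      ring
    · rw [dif_neg hj0]
      unfold betaM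
      rw [Matrix.sub_apply, Matrix.smul_apply, Matrix.vecMulVec_apply, ← huu,
        Matrix.one_apply, smul_eq_mul]
      by_cases hj1 : (j:ℕ) = 1
      · have h1j : one = j := Fin.ext (show (1:ℕ) = (j:ℕ) by omega)
        rw [if_pos h1j]
        have hc : crow R n m ⟨(j:ℕ) - 1, by omega⟩ = 1 := by
          unfold crow; rw [if_pos (show (j:ℕ) - 1 = 0 by omega)]
        rw [hc, mul_one]
        by_cases hi1 : (i:ℕ) = 1
        · have hij : i = j := Fin.ext (by omega)
          have hij' : (⟨(i:ℕ) - 1, by omega⟩ : Fin (n + 2*m - 1)) =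
              (⟨(j:ℕ) - 1, by omega⟩ : Fin (n + 2*m - 1)) :=
            Fin.ext (show (i:ℕ) - 1 = (j:ℕ) - 1 by omega)
          have hxi : x i = 0 := by simp only [hx]; exact dif_neg (by omega)
          rw [if_pos hij, if_pos hij', hxi]
          have : uu ⟨(i:ℕ) - 1, by omega⟩ = 0 := by
            have he : (⟨(i:ℕ) - 1, by omega⟩ : Fin (n + 2*m - 1)) = ⟨0, by omega⟩ :=
              Fin.ext (show (i:ℕ) - 1 = 0 by omega)
            rw [he]; exact hu0
          rw [this]
          ring
        · have hij : i ≠ j := by intro h; have : (i:ℕ) = (j:ℕ) := congrArg Fin.val h; omega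
          have hij' : (⟨(i:ℕ) - 1, by omega⟩ : Fin (n + 2*m - 1)) ≠
              (⟨(j:ℕ) - 1, by omega⟩ : Fin (n + 2*m - 1)) := by
            intro h; have : (i:ℕ) - 1 = (j:ℕ) - 1 := congrArg Fin.val h; omega
          have hxi : x i = -(P.i * uu ⟨(i:ℕ) - 1, by omega⟩) := by
            simp only [hx]; exact dif_pos (by omega)
          rw [if_neg hij, if_neg hij', hxi]
          ring
      · have h1j : one ≠ j := by intro h; have : (1:ℕ) = (j:ℕ) := congrArg Fin.val h; omega
        rw [if_neg h1j]
        have hc : crow R n m ⟨(j:ℕ) - 1, by omega⟩ = 0 := by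
          unfold crow; rw [if_neg (show ¬((j:ℕ) - 1 = 0) by omega)]
        rw [hc, mul_zero, mul_zero, sub_zero, add_zero, add_zero]
        by_cases hij : i = j
        · have hij' : (⟨(i:ℕ) - 1, by omega⟩ : Fin (n + 2*m - 1)) =
              (⟨(j:ℕ) - 1, by omega⟩ : Fin (n + 2*m - 1)) := by
            have : (i:ℕ) = (j:ℕ) := congrArg Fin.val hij
            exact Fin.ext (show (i:ℕ) - 1 = (j:ℕ) - 1 by omega)
          rw [if_pos hij, if_pos hij']
        · have hij' : (⟨(i:ℕ) - 1, by omega⟩ : Fin (n + 2*m - 1)) ≠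
              (⟨(j:ℕ) - 1, by omega⟩ : Fin (n + 2*m - 1)) := by
            intro h
            have h2 : (i:ℕ) - 1 = (j:ℕ) - 1 := congrArg Fin.val h
            exact hij (Fin.ext (by omega))
          rw [if_neg hij, if_neg hij']


end OddUnitary
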